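/- If a multiplicative function f : ℕ → ℂ satisfies f(x² + xy + y²) = f(x)² + f(x)f(y) + f(y)² for all positive integers x, y, then f(2) = 2, f(5) = 5, f(7) = 7, and f(13) = 13. -/
import Mathlib


theorem stmt_2 (f : ℕ → ℂ) (h1 : f 1 = 1)
    (hmul : ∀ m n : ℕ, Nat.gcd m n = 1 → f (m * n) = f m * f n)
    (hfe : ∀ x y : ℕ, 0 < x → 0 < y →
      f (x ^ 2 + y ^ 2 + x * y) = f x ^ 2 + f x * f y + f y ^ 2) :
    f 2 = 2 ∧ f 5 = 5 ∧ f 7 = 7 ∧ f 13 = 13 := by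
  have h3 : f 3 = 3 := by
    have h := hfe 1 1 one_pos one_pos
    norm_num [h1] at h
    linear_combination h
  have h13 : f 13 = 13 := by
    have h := hfe 1 3 one_pos (by norm_num)
    norm_num [h1, h3] at h
    linear_combination h
  have h7 : f 7 = 1 + f 2 + f 2 ^ 2 := by
    have h := hfe 1 2 one_pos (by norm_num)
    norm_num [h1] at h
    linear_combination h
  have h12 : f 12 = 3 * f 2 ^ 2 := by
    have h := hfe 2 2 (by norm_num) (by norm_num)
    norm_num at h
    linear_combination h
  have h12' : f 12 = 3 * f 4 := by
    have h := hmul 3 4 (by norm_num)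
    norm_num [h3] at h
    linear_combination h
  have h4 : f 4 = f 2 ^ 2 := by linear_combination (h12' - h12) / (-3)
  have h21 : f 21 = 1 + f 2 ^ 2 + f 2 ^ 4 := by
    have h := hfe 1 4 one_pos (by norm_num)
    norm_num [h1, h4] at h
    linear_combination h
  have h21' : f 21 = 3 * f 7 := by
    have h := hmul 3 7 (by norm_num)
    norm_num [h3] at h
    linear_combination h
  have h19 : f 19 = f 2 ^ 2 + 3 * f 2 + 9 := by
    have h := hfe 2 3 (by norm_num) (by norm_num)
    norm_num [h3] at h
    linear_combination h
  have h57 : f 57 = 1 + f 7 + f 7 ^ 2 := by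
    have h := hfe 1 7 one_pos (by norm_num)
    norm_num [h1] at h
    linear_combination h
  have h57' : f 57 = 3 * f 19 := by
    have h := hmul 3 19 (by norm_num)
    norm_num [h3] at h
    linear_combination h
  have hP : f 2 ^ 4 - 2 * f 2 ^ 2 - 3 * f 2 - 2 = 0 := by
    linear_combination -h21 + h21' + 3 * h7
  have hQ : f 2 ^ 4 + 2 * f 2 ^ 3 + f 2 ^ 2 - 6 * f 2 - 24 = 0 := by
    linear_combination -h57 + h57' + 3 * h19 - (2 + f 2 + f 2 ^ 2 + f 7) * h7
  have h2 : f 2 = 2 := by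
    linear_combination (-(1:ℂ)/61 + (3/122) * f 2 - (7/366) * f 2 ^ 2) * hP +
      ((31:ℂ)/366 - (23/366) * f 2 + (7/366) * f 2 ^ 2) * hQ
  have h7' : f 7 = 7 := by rw [h7, h2]; norm_num
  have h39 : f 39 = 4 + 2 * f 5 + f 5 ^ 2 := by
    have h := hfe 2 5 (by norm_num) (by norm_num)
    norm_num [h2] at h
    linear_combination h
  have h39' : f 39 = 39 := by
    have h := hmul 3 13 (by norm_num)
    norm_num [h3, h13] at h
    linear_combination h
  have h6 : f 6 = 6 := by
    have h := hmul 2 3 (by norm_num)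
    norm_num [h2, h3] at h
    linear_combination h
  have h91 : f 91 = f 5 ^ 2 + 6 * f 5 + 36 := by
    have h := hfe 5 6 (by norm_num) (by norm_num)
    norm_num [h6] at h
    linear_combination h
  have h91' : f 91 = 91 := by
    have h := hmul 7 13 (by norm_num)
    norm_num [h7', h13] at h
    linear_combination h
  have h5 : f 5 = 5 := by
    linear_combination (h91 - h91' - h39 + h39') / (-4)
  exact ⟨h2, h5, h7', h13⟩
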